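/- Let G be a finite group and K ≤ X ≤ H ≤ G subgroups. Then m_H(K)·m_G(X) = m_H(X)·m_G(K) if and only if C_G(K) ⊆ H·C_G(X). -/
import Mathlib


open scoped Pointwise

/-- Relative Chermak–Delgado measure `m_W(K) = |K| * |C_W(K)|`. -/
noncomputable def m {G : Type*} [Group G] (W K : Subgroup G) : ℕ :=
  Nat.card K * Nat.card (W ⊓ Subgroup.centralizer (K : Set G) : Subgroup G)

section Aux

variable {G : Type*} [Group G]

/-- The image of `H` in the coset space `G ⧸ A` is equivalent to `H ⧸ A.subgroupOf H`. -/
noncomputable def quotEquivImage (H A : Subgroup G) :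
    (H ⧸ A.subgroupOf H) ≃ ((↑) '' (H : Set G) : Set (G ⧸ A)) := by
  refine Equiv.ofBijective
    (fun q => Quotient.liftOn' q
      (fun h => (⟨QuotientGroup.mk (h : G), h, h.2, rfl⟩ :
        ((↑) '' (H : Set G) : Set (G ⧸ A))))
      (fun a b hab => by
        apply Subtype.ext
        change QuotientGroup.mk (a : G) = QuotientGroup.mk (b : G)
        rw [QuotientGroup.eq]
        have := QuotientGroup.leftRel_apply.mp hab
        rw [Subgroup.mem_subgroupOf] at this
        simpa using this)) ⟨?_, ?_⟩
  · intro q₁ q₂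
    refine Quotient.inductionOn₂' q₁ q₂ (fun a b h => ?_)
    have h' : QuotientGroup.mk (a : G) = QuotientGroup.mk (b : G) :=
      congrArg Subtype.val h
    rw [QuotientGroup.eq] at h'
    apply Quotient.sound'
    rw [QuotientGroup.leftRel_apply, Subgroup.mem_subgroupOf]
    simpa using h'
  · rintro ⟨x, h, hh, rfl⟩
    exact ⟨QuotientGroup.mk (⟨h, hh⟩ : H), rfl⟩

/-- Product formula: `|H·A| · |H ⊓ A| = |H| · |A|`. -/
theorem card_mul_inf [Finite G] (H A : Subgroup G) :
    Nat.card ((H : Set G) * (A : Set G)) * Nat.card (H ⊓ A : Subgroup G) =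
      Nat.card H * Nat.card A := by
  rw [Subgroup.card_mul_eq_card_subgroup_mul_card_quotient A (H : Set G)]
  have h1 : Nat.card (((H : Set G)).image ((↑) : G → G ⧸ A) : Set (G ⧸ A)) =
      Nat.card (H ⧸ A.subgroupOf H) := (Nat.card_congr (quotEquivImage H A)).symm
  have h2 : Nat.card (A.subgroupOf H) = Nat.card (H ⊓ A : Subgroup G) := by
    rw [← Subgroup.inf_subgroupOf_left A H]
    exact Nat.card_congr (Subgroup.subgroupOfEquivOfLe (inf_le_left : H ⊓ A ≤ H)).toEquiv
  have h3 : Nat.card H = Nat.card (H ⧸ A.subgroupOf H) * Nat.card (A.subgroupOf H) :=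
    Subgroup.card_eq_card_quotient_mul_card_subgroup _
  rw [h1, ← h2, h3]
  ring

end Aux

theorem stmt3 {G : Type*} [Group G] [Finite G] (K X H : Subgroup G)
    (hKX : K ≤ X) (hXH : X ≤ H) :
    m H K * m (⊤ : Subgroup G) X = m H X * m (⊤ : Subgroup G) K ↔
      (Subgroup.centralizer (K : Set G) : Set G) ⊆
        (H : Set G) * (Subgroup.centralizer (X : Set G) : Set G) := by
  set A := Subgroup.centralizer (K : Set G) with hA
  set B := Subgroup.centralizer (X : Set G) with hB
  have hBA : B ≤ A := Subgroup.centralizer_le (by exact_mod_cast hKX)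
  -- positivity facts
  have hKpos : 0 < Nat.card K := Nat.card_pos
  have hXpos : 0 < Nat.card X := Nat.card_pos
  have hHpos : 0 < Nat.card H := Nat.card_pos
  have hApos : 0 < Nat.card A := Nat.card_pos
  have hBpos : 0 < Nat.card B := Nat.card_pos
  have hHApos : 0 < Nat.card (H ⊓ A : Subgroup G) := Nat.card_pos
  have hHBpos : 0 < Nat.card (H ⊓ B : Subgroup G) := Nat.card_pos
  have keyA := card_mul_inf H A
  have keyB := card_mul_inf H B
  have hPpos : 0 < Nat.card ((H : Set G) * (A : Set G)) := by
    have hne : ((H : Set G) * (A : Set G)).Nonempty :=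
      ⟨1, 1, H.one_mem, 1, A.one_mem, by simp⟩
    have := hne.to_subtype
    exact Nat.card_pos
  -- step 1 : the measure equation reduces to |H⊓A|·|B| = |H⊓B|·|A|
  have step1 : m H K * m (⊤ : Subgroup G) X = m H X * m (⊤ : Subgroup G) K ↔
      Nat.card (H ⊓ A : Subgroup G) * Nat.card B =
        Nat.card (H ⊓ B : Subgroup G) * Nat.card A := by
    unfold m
    rw [top_inf_eq, top_inf_eq, ← hA, ← hB]
    rw [show Nat.card K * Nat.card (H ⊓ A : Subgroup G) * (Nat.card X * Nat.card B)
        = (Nat.card K * Nat.card X) * (Nat.card (H ⊓ A : Subgroup G) * Nat.card B) by ring,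
      show Nat.card X * Nat.card (H ⊓ B : Subgroup G) * (Nat.card K * Nat.card A)
        = (Nat.card K * Nat.card X) * (Nat.card (H ⊓ B : Subgroup G) * Nat.card A) by ring]
    exact mul_right_inj' (by positivity)
  -- step 2 : that is equivalent to |H·A| = |H·B|
  have step2 : Nat.card (H ⊓ A : Subgroup G) * Nat.card B =
      Nat.card (H ⊓ B : Subgroup G) * Nat.card A ↔
      Nat.card ((H : Set G) * (A : Set G)) = Nat.card ((H : Set G) * (B : Set G)) := by
    set P := Nat.card ((H : Set G) * (A : Set G))
    set Q := Nat.card ((H : Set G) * (B : Set G))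
    set a := Nat.card (H ⊓ A : Subgroup G)
    set b := Nat.card (H ⊓ B : Subgroup G)
    constructor
    · intro h
      have : P * (a * (b * Nat.card H)) = Q * (a * (b * Nat.card H)) := by
        calc P * (a * (b * Nat.card H)) = (P * a) * b * Nat.card H := by ring
          _ = (Nat.card H * Nat.card A) * b * Nat.card H := by rw [keyA]
          _ = (b * Nat.card A) * Nat.card H * Nat.card H := by ring
          _ = (a * Nat.card B) * Nat.card H * Nat.card H := by rw [h]
          _ = (Nat.card H * Nat.card B) * a * Nat.card H := by ring
          _ = (Q * b) * a * Nat.card H := by rw [keyB]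
          _ = Q * (a * (b * Nat.card H)) := by ring
      exact Nat.eq_of_mul_eq_mul_right (by positivity) this
    · intro h
      have : (a * Nat.card B) * (P * Nat.card H) =
          (b * Nat.card A) * (P * Nat.card H) := by
        calc (a * Nat.card B) * (P * Nat.card H)
            = (Nat.card H * Nat.card B) * (P * a) := by ring
          _ = (Q * b) * (Nat.card H * Nat.card A) := by rw [keyA, keyB]
          _ = (P * b) * (Nat.card H * Nat.card A) := by rw [h]
          _ = (b * (Nat.card H * Nat.card A)) * P := by ring
          _ = (b * (P * a)) * P := by rw [keyA]
          _ = (b * (Nat.card H * Nat.card A)) * P := by rw [keyA]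
          _ = (b * Nat.card A) * (P * Nat.card H) := by ring
      exact Nat.eq_of_mul_eq_mul_right (by positivity) this
  -- step 3 : that is equivalent to equality of product sets
  have hsub : (H : Set G) * (B : Set G) ⊆ (H : Set G) * (A : Set G) :=
    Set.mul_subset_mul_left (by exact_mod_cast hBA)
  have step3 : Nat.card ((H : Set G) * (A : Set G)) = Nat.card ((H : Set G) * (B : Set G)) ↔
      (H : Set G) * (A : Set G) = (H : Set G) * (B : Set G) := by
    constructor
    · intro h
      refine (Set.eq_of_subset_of_ncard_le hsub ?_ (Set.toFinite _)).symm
      rw [← Nat.card_coe_set_eq, ← Nat.card_coe_set_eq, h]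
    · intro h; rw [h]
  -- step 4 : that is equivalent to A ⊆ H·B
  have step4 : (H : Set G) * (A : Set G) = (H : Set G) * (B : Set G) ↔
      (A : Set G) ⊆ (H : Set G) * (B : Set G) := by
    constructor
    · intro h
      intro x hx
      rw [← h]
      exact ⟨1, H.one_mem, x, hx, one_mul x⟩
    · intro h
      refine Set.Subset.antisymm ?_ hsub
      calc (H : Set G) * (A : Set G) ⊆ (H : Set G) * ((H : Set G) * (B : Set G)) :=
            Set.mul_subset_mul_left h
        _ = ((H : Set G) * (H : Set G)) * (B : Set G) := (mul_assoc _ _ _).symm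
        _ = (H : Set G) * (B : Set G) := by rw [coe_mul_coe]
  rw [step1, step2, step3, step4]
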